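/- arXiv:1202.2507 — 8 statements merged into one kernel-verified Lean document; each statement's English description precedes it below -/
import Mathlib

section
/- For every sequence a : ℕ → ℚ, every μ ∈ ℚ and every n ∈ ℕ, the Hankel determinant of the μ-binomial transform of a equals the Hankel determinant of a; that is, if b_m = Σ_{i=0}^{m} C(m,i) μ^{m-i} a_i for all m, then det((b_{j+k})_{0 ≤ j,k ≤ n}) = det((a_{j+k})_{0 ≤ j,k ≤ n}). -/
open Finset Matrix

private lemma key_sum (a : ℕ → ℚ) (μ : ℚ) (j k : ℕ) :
    ∑ i ∈ range (j + 1), ∑ l ∈ range (k + 1),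
      ((j.choose i : ℚ) * μ ^ (j - i)) * (a (i + l)) * ((k.choose l : ℚ) * μ ^ (k - l))
    = ∑ s ∈ range (j + k + 1), ((j + k).choose s : ℚ) * μ ^ (j + k - s) * a s := by
  set g : ℕ × ℕ → ℚ := fun p =>
    (j.choose p.1 : ℚ) * (k.choose p.2 : ℚ) * μ ^ (j + k - (p.1 + p.2)) * a (p.1 + p.2) with hg
  have stepA : ∑ i ∈ range (j + 1), ∑ l ∈ range (k + 1),
      ((j.choose i : ℚ) * μ ^ (j - i)) * (a (i + l)) * ((k.choose l : ℚ) * μ ^ (k - l))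
      = ∑ p ∈ range (j + 1) ×ˢ range (k + 1), g p := by
    rw [Finset.sum_product]
    refine Finset.sum_congr rfl fun i hi => Finset.sum_congr rfl fun l hl => ?_
    simp only [Finset.mem_range] at hi hl
    have h1 : (j - i) + (k - l) = j + k - (i + l) := by omega
    rw [hg]
    simp only
    rw [← h1, pow_add]
    ring
  have stepB : ∑ p ∈ range (j + 1) ×ˢ range (k + 1), g p
      = ∑ p ∈ range (j + k + 1) ×ˢ range (j + k + 1), g p := by
    refine Finset.sum_subset ?_ ?_
    · intro p hp
      simp only [Finset.mem_product, Finset.mem_range] at hp ⊢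
      omega
    · intro p hp hnp
      simp only [Finset.mem_product, Finset.mem_range] at hp hnp
      have : j < p.1 ∨ k < p.2 := by omega
      rcases this with h | h
      · simp [hg, Nat.choose_eq_zero_of_lt h]
      · simp [hg, Nat.choose_eq_zero_of_lt h]
  have stepC : ∑ p ∈ range (j + k + 1) ×ˢ range (j + k + 1), g p
      = ∑ p ∈ (range (j + k + 1) ×ˢ range (j + k + 1)).filter
          (fun p => p.1 + p.2 ≤ j + k), g p := by
    refine (Finset.sum_subset (Finset.filter_subset _ _) ?_).symm
    · intro p hp hnp
      simp only [Finset.mem_filter, Finset.mem_product, Finset.mem_range] at hp hnp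
      have : j < p.1 ∨ k < p.2 := by omega
      rcases this with h | h
      · simp [hg, Nat.choose_eq_zero_of_lt h]
      · simp [hg, Nat.choose_eq_zero_of_lt h]
  have stepD : ∑ s ∈ range (j + k + 1), ((j + k).choose s : ℚ) * μ ^ (j + k - s) * a s
      = ∑ p ∈ (range (j + k + 1) ×ˢ range (j + k + 1)).filter
          (fun p => p.1 + p.2 ≤ j + k), g p := by
    have : ∀ s ∈ range (j + k + 1),
        ((j + k).choose s : ℚ) * μ ^ (j + k - s) * a s
        = ∑ p ∈ Finset.HasAntidiagonal.antidiagonal s, g p := by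
      intro s hs
      rw [Nat.add_choose_eq]
      push_cast
      rw [Finset.sum_mul, Finset.sum_mul]
      refine Finset.sum_congr rfl fun p hp => ?_
      rw [Finset.HasAntidiagonal.mem_antidiagonal] at hp
      rw [hg]
      simp only [hp]
    rw [Finset.sum_congr rfl this,
      ← Finset.sum_sigma (range (j + k + 1)) (fun s => Finset.HasAntidiagonal.antidiagonal s) (fun x => g x.2)]
    refine Finset.sum_nbij' (fun x => x.2) (fun p => ⟨p.1 + p.2, p⟩) ?_ ?_ ?_ ?_ ?_
    · intro x hx
      simp only [Finset.mem_sigma, Finset.mem_range, Finset.HasAntidiagonal.mem_antidiagonal] at hx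
      simp only [Finset.mem_filter, Finset.mem_product, Finset.mem_range]
      omega
    · intro p hp
      simp only [Finset.mem_filter, Finset.mem_product, Finset.mem_range] at hp
      simp only [Finset.mem_sigma, Finset.mem_range, Finset.HasAntidiagonal.mem_antidiagonal]
      exact ⟨by omega, trivial⟩
    · intro x hx
      simp only [Finset.mem_sigma, Finset.mem_range, Finset.HasAntidiagonal.mem_antidiagonal] at hx
      exact Sigma.ext (by simp [hx.2]) (by simp)
    · intro p hp
      rfl
    · intro x hx
      rfl
  rw [stepA, stepB, stepC, stepD]

/-- The Hankel transformation is invariant under the μ-binomial transform. -/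
theorem hankel_binomial_invariant (a : ℕ → ℚ) (μ : ℚ) (n : ℕ) (b : ℕ → ℚ)
    (hb : ∀ m, b m = ∑ i ∈ Finset.range (m + 1), (m.choose i : ℚ) * μ ^ (m - i) * a i) :
    (Matrix.of fun j k : Fin (n + 1) => b ((j : ℕ) + (k : ℕ))).det
      = (Matrix.of fun j k : Fin (n + 1) => a ((j : ℕ) + (k : ℕ))).det := by
  set P : Matrix (Fin (n + 1)) (Fin (n + 1)) ℚ :=
    Matrix.of fun j i : Fin (n + 1) => ((j : ℕ).choose (i : ℕ) : ℚ) * μ ^ ((j : ℕ) - (i : ℕ))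
    with hP
  set A : Matrix (Fin (n + 1)) (Fin (n + 1)) ℚ :=
    Matrix.of fun j k : Fin (n + 1) => a ((j : ℕ) + (k : ℕ)) with hA
  have hfact : (Matrix.of fun j k : Fin (n + 1) => b ((j : ℕ) + (k : ℕ))) = P * A * Pᵀ := by
    ext j k
    simp only [Matrix.mul_apply, Matrix.transpose_apply, Matrix.of_apply, hP, hA,
      Finset.sum_mul]
    rw [Finset.sum_comm]
    symm
    have inner : ∀ y : Fin (n + 1), ∑ x : Fin (n + 1),
        ((j : ℕ).choose (y : ℕ) : ℚ) * μ ^ ((j : ℕ) - (y : ℕ)) * a ((y : ℕ) + (x : ℕ))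
          * (((k : ℕ).choose (x : ℕ) : ℚ) * μ ^ ((k : ℕ) - (x : ℕ)))
        = ∑ x ∈ range (n + 1),
        ((j : ℕ).choose (y : ℕ) : ℚ) * μ ^ ((j : ℕ) - (y : ℕ)) * a ((y : ℕ) + x)
          * (((k : ℕ).choose x : ℚ) * μ ^ ((k : ℕ) - x)) := fun y =>
      Fin.sum_univ_eq_sum_range (fun x =>
        ((j : ℕ).choose (y : ℕ) : ℚ) * μ ^ ((j : ℕ) - (y : ℕ)) * a ((y : ℕ) + x)
          * (((k : ℕ).choose x : ℚ) * μ ^ ((k : ℕ) - x))) (n + 1)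
    simp only [inner]
    rw [Fin.sum_univ_eq_sum_range (fun y => ∑ x ∈ range (n + 1),
      ((j : ℕ).choose y : ℚ) * μ ^ ((j : ℕ) - y) * a (y + x)
        * (((k : ℕ).choose x : ℚ) * μ ^ ((k : ℕ) - x))) (n + 1)]
    have shrink : ∑ i ∈ range (n + 1), ∑ l ∈ range (n + 1),
        ((j : ℕ).choose i : ℚ) * μ ^ ((j : ℕ) - i)
          * a (i + l) * (((k : ℕ).choose l : ℚ) * μ ^ ((k : ℕ) - l))
        = ∑ i ∈ range ((j : ℕ) + 1), ∑ l ∈ range ((k : ℕ) + 1),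
        ((j : ℕ).choose i : ℚ) * μ ^ ((j : ℕ) - i)
          * a (i + l) * (((k : ℕ).choose l : ℚ) * μ ^ ((k : ℕ) - l)) := by
      rw [Finset.sum_congr rfl (fun i (_ : i ∈ range (n + 1)) => (Finset.sum_subset
        (Finset.range_subset_range.2 (by omega : (k : ℕ) + 1 ≤ n + 1))
        (fun l _ hl => by
          rw [Finset.mem_range, not_lt] at hl
          simp [Nat.choose_eq_zero_of_lt (by omega : (k : ℕ) < l)])).symm)]
      refine (Finset.sum_subset (Finset.range_subset_range.2 (by omega : (j : ℕ) + 1 ≤ n + 1))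
        (fun i _ hi => ?_)).symm
      rw [Finset.mem_range, not_lt] at hi
      simp [Nat.choose_eq_zero_of_lt (by omega : (j : ℕ) < i)]
    rw [shrink, key_sum, hb]
  rw [hfact, Matrix.det_mul, Matrix.det_mul, Matrix.det_transpose]
  have hdetP : P.det = 1 := by
    rw [Matrix.det_of_lowerTriangular P (fun i j hij => by
      simp only [hP, Matrix.of_apply]
      rw [Nat.choose_eq_zero_of_lt (by exact_mod_cast hij)]
      simp)]
    simp [hP]
  rw [hdetP]
  ring
end

section
/- Let 𝒟 be the basic Weitzenböck derivation on the polynomial ring ℚ[x_0, x_1, …, x_{2n}] (the ℚ-derivation with 𝒟(x_0) = 0 and 𝒟(x_i) = i·x_{i-1} for 1 ≤ i ≤ 2n). Then 𝒟 annihilates the catalecticant: 𝒟(det((x_{j+k})_{0 ≤ j,k ≤ n})) = 0. -/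
open MvPolynomial

/-- Product rule for a derivation over a finite product. -/
lemma deriv_prod_aux {A : Type*} [CommRing A] [Algebra ℚ A]
    (D : Derivation ℚ A A) {ι : Type*} [DecidableEq ι] (s : Finset ι) (f : ι → A) :
    D (∏ i ∈ s, f i) = ∑ i ∈ s, (∏ j ∈ s.erase i, f j) * D (f i) := by
  induction s using Finset.induction_on with
  | empty => simp
  | @insert a s ha ih =>
    rw [Finset.prod_insert ha, D.leibniz, smul_eq_mul, smul_eq_mul, ih, Finset.mul_sum,
      Finset.sum_insert ha, Finset.erase_insert ha, add_comm]
    congr 1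
    refine Finset.sum_congr rfl fun i hi => ?_
    rw [Finset.erase_insert_of_ne (Ne.symm (ne_of_mem_of_not_mem hi ha)),
      Finset.prod_insert (fun hmem => ha (Finset.mem_of_mem_erase hmem)), mul_assoc]

/-- Derivation of a determinant: sum over rows of determinants with one row differentiated. -/
lemma deriv_det_aux {A : Type*} [CommRing A] [Algebra ℚ A] (D : Derivation ℚ A A)
    {m : ℕ} (M : Matrix (Fin m) (Fin m) A) :
    D M.det = ∑ i, (M.updateRow i fun k => D (M i k)).det := by
  simp only [Matrix.det_apply]
  rw [map_sum, Finset.sum_comm]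
  refine Finset.sum_congr rfl fun σ _ => ?_
  rw [Units.smul_def, map_zsmul, deriv_prod_aux D, ← Units.smul_def, ← Finset.smul_sum]
  congr 1
  have key : ∀ j : Fin m, (∏ k, (M.updateRow (σ j) fun k => D (M (σ j) k)) (σ k) k)
      = (∏ k ∈ Finset.univ.erase j, M (σ k) k) * D (M (σ j) j) := by
    intro j
    rw [← Finset.mul_prod_erase Finset.univ _ (Finset.mem_univ j), mul_comm]
    congr 1
    · refine Finset.prod_congr rfl fun k hk => ?_
      rw [Matrix.updateRow_apply, if_neg (fun hc => (Finset.mem_erase.mp hk).1 (σ.injective hc))]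
    · rw [Matrix.updateRow_apply, if_pos rfl]
  rw [← Equiv.sum_comp σ fun i => ∏ k, (M.updateRow i fun k => D (M i k)) (σ k) k]
  exact Finset.sum_congr rfl fun j _ => (key j).symm

/-- Expanding a determinant with an updated row via the adjugate. -/
lemma det_updateRow_eq_sum_aux {A : Type*} [CommRing A] {m : ℕ}
    (M : Matrix (Fin m) (Fin m) A) (i : Fin m) (v : Fin m → A) :
    (M.updateRow i v).det = ∑ k, v k * Matrix.adjugate M k i := by
  let L : (Fin m → A) →ₗ[A] A :=
    { toFun := fun w => (M.updateRow i w).det,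
      map_add' := fun u v => Matrix.det_updateRow_add M i u v,
      map_smul' := fun s u => Matrix.det_updateRow_smul M i s u }
  calc (M.updateRow i v).det = L v := rfl
    _ = ∑ k, v k • L (fun j => if k = j then 1 else 0) := LinearMap.pi_apply_eq_sum_univ L v
    _ = ∑ k, v k * Matrix.adjugate M k i := by
        refine Finset.sum_congr rfl fun k _ => ?_
        have hfun : (fun j => if k = j then (1 : A) else 0) = Pi.single k (1 : A) := by
          funext j
          simp [Pi.single_apply, eq_comm]
        rw [smul_eq_mul, hfun, Matrix.adjugate_apply]
        rfl

/-- The basic Weitzenböck derivation annihilates the catalecticant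
(the Hankel determinant in the variables `x_0, …, x_{2n}`). -/
theorem weitzenbock_catalecticant (n : ℕ)
    (D : Derivation ℚ (MvPolynomial (Fin (2 * n + 1)) ℚ) (MvPolynomial (Fin (2 * n + 1)) ℚ))
    (h0 : D (X (⟨0, by omega⟩ : Fin (2 * n + 1))) = 0)
    (h : ∀ i : Fin (2 * n + 1), 1 ≤ (i : ℕ) →
      D (X i) = ((i : ℕ) : ℚ) • X (⟨(i : ℕ) - 1, by have := i.isLt; omega⟩ : Fin (2 * n + 1))) :
    D ((Matrix.of fun j k : Fin (n + 1) =>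
        X (⟨(j : ℕ) + (k : ℕ), by have := j.isLt; have := k.isLt; omega⟩
          : Fin (2 * n + 1))).det) = 0 := by
  set M : Matrix (Fin (n + 1)) (Fin (n + 1)) (MvPolynomial (Fin (2 * n + 1)) ℚ) :=
    Matrix.of fun j k : Fin (n + 1) =>
      X (⟨(j : ℕ) + (k : ℕ), by have := j.isLt; have := k.isLt; omega⟩
        : Fin (2 * n + 1)) with hMdef
  have hMentry : ∀ (j k : Fin (n + 1)) (p : (j : ℕ) + (k : ℕ) < 2 * n + 1),
      M j k = X (⟨(j : ℕ) + (k : ℕ), p⟩ : Fin (2 * n + 1)) := fun j k p => rfl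
  have hidx : ∀ i k : Fin (n + 1), (i : ℕ) + (k : ℕ) - 1 < 2 * n + 1 := by
    intro i k; have := i.isLt; have := k.isLt; omega
  set idx : Fin (n + 1) → Fin (n + 1) → Fin (2 * n + 1) :=
    fun i k => ⟨(i : ℕ) + (k : ℕ) - 1, hidx i k⟩ with hidxdef
  -- derivative of each entry
  have hD : ∀ i k : Fin (n + 1),
      D (M i k) = (((i : ℕ) + (k : ℕ) : ℕ) : ℚ) • X (idx i k) := by
    intro i k
    by_cases hik : (i : ℕ) + (k : ℕ) = 0
    · have h1 : M i k = X (⟨0, by omega⟩ : Fin (2 * n + 1)) := by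
        rw [hMentry i k (by omega)]
        exact congrArg X (Fin.ext (by show (i : ℕ) + (k : ℕ) = 0; omega))
      rw [h1, h0, hik]
      simp
    · have h1 : 1 ≤ ((⟨(i : ℕ) + (k : ℕ), by have := i.isLt; have := k.isLt; omega⟩ :
          Fin (2 * n + 1)) : ℕ) := by show 1 ≤ (i : ℕ) + (k : ℕ); omega
      have h2 := h _ h1
      rw [hMentry i k (by have := i.isLt; have := k.isLt; omega), h2]
  rw [deriv_det_aux D]
  have expand : ∀ i : Fin (n + 1), (M.updateRow i fun k => D (M i k)).det
      = ∑ k, ((((i : ℕ) : ℚ) • (X (idx i k) * Matrix.adjugate M k i))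
          + (((k : ℕ) : ℚ) • (X (idx i k) * Matrix.adjugate M k i))) := by
    intro i
    rw [det_updateRow_eq_sum_aux]
    refine Finset.sum_congr rfl fun k _ => ?_
    rw [hD i k, smul_mul_assoc, Nat.cast_add, add_smul]
  simp_rw [expand, Finset.sum_add_distrib]
  have part1 : ∀ i : Fin (n + 1),
      (∑ k, ((i : ℕ) : ℚ) • (X (idx i k) * Matrix.adjugate M k i)) = 0 := by
    intro i
    by_cases hi : (i : ℕ) = 0
    · simp [hi]
    · have hlt : (i : ℕ) - 1 < n + 1 := by have := i.isLt; omega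
      have hrow : ∀ k : Fin (n + 1), X (idx i k) = M (⟨(i : ℕ) - 1, hlt⟩ : Fin (n + 1)) k := by
        intro k
        rw [hMentry ⟨(i : ℕ) - 1, hlt⟩ k (by have := k.isLt; omega)]
        exact congrArg X (Fin.ext (by show (i : ℕ) + (k : ℕ) - 1 = (i : ℕ) - 1 + (k : ℕ); omega))
      have hsum : (∑ k, X (idx i k) * Matrix.adjugate M k i)
          = (M * Matrix.adjugate M) (⟨(i : ℕ) - 1, hlt⟩ : Fin (n + 1)) i := by
        rw [Matrix.mul_apply]
        exact Finset.sum_congr rfl fun k _ => by rw [hrow k]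
      have hne : (⟨(i : ℕ) - 1, hlt⟩ : Fin (n + 1)) ≠ i := by
        intro hc
        have := congrArg Fin.val hc
        simp only [Fin.val_mk] at this
        omega
      rw [← Finset.smul_sum, hsum, Matrix.mul_adjugate, Matrix.smul_apply,
        Matrix.one_apply_ne hne, smul_zero, smul_zero]
  have part2 : (∑ i : Fin (n + 1), ∑ k : Fin (n + 1),
      ((k : ℕ) : ℚ) • (X (idx i k) * Matrix.adjugate M k i)) = 0 := by
    rw [Finset.sum_comm]
    refine Finset.sum_eq_zero fun k _ => ?_
    by_cases hk : (k : ℕ) = 0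
    · simp [hk]
    · have hlt : (k : ℕ) - 1 < n + 1 := by have := k.isLt; omega
      have hcol : ∀ i : Fin (n + 1), X (idx i k) = M i (⟨(k : ℕ) - 1, hlt⟩ : Fin (n + 1)) := by
        intro i
        rw [hMentry i ⟨(k : ℕ) - 1, hlt⟩ (by have := i.isLt; omega)]
        exact congrArg X (Fin.ext (by show (i : ℕ) + (k : ℕ) - 1 = (i : ℕ) + ((k : ℕ) - 1); omega))
      have hsum : (∑ i, X (idx i k) * Matrix.adjugate M k i)
          = (Matrix.adjugate M * M) k (⟨(k : ℕ) - 1, hlt⟩ : Fin (n + 1)) := by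
        rw [Matrix.mul_apply]
        exact Finset.sum_congr rfl fun i _ => by rw [hcol i]; ring
      have hne : k ≠ (⟨(k : ℕ) - 1, hlt⟩ : Fin (n + 1)) := by
        intro hc
        have := congrArg Fin.val hc
        simp only [Fin.val_mk] at this
        omega
      rw [← Finset.smul_sum, hsum, Matrix.adjugate_mul, Matrix.smul_apply,
        Matrix.one_apply_ne hne, smul_zero, smul_zero]
  rw [Finset.sum_eq_zero (fun i _ => part1 i), part2, add_zero]
end

section
/- Let 𝒟 be the basic Weitzenböck derivation on ℚ[x_0, …, x_m], and for each μ ∈ ℚ let φ_μ be the ℚ-algebra endomorphism of ℚ[x_0, …, x_m] determined by φ_μ(x_n) = Σ_{i=0}^{n} C(n,i) μ^{n-i} x_i. Then a polynomial f ∈ ℚ[x_0, …, x_m] satisfies φ_μ(f) = f for all μ ∈ ℚ if and only if 𝒟(f) = 0. -/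
open MvPolynomial

/-- The μ-binomial substitution: the ℚ-algebra endomorphism of `ℚ[x_0, …, x_m]`
sending `x_n` to `∑_{i=0}^{n} C(n,i) μ^{n-i} x_i`. -/
noncomputable def binomialSubst (m : ℕ) (μ : ℚ) :
    MvPolynomial (Fin (m + 1)) ℚ →ₐ[ℚ] MvPolynomial (Fin (m + 1)) ℚ :=
  aeval fun v : Fin (m + 1) =>
    ∑ i ∈ (Finset.range ((v : ℕ) + 1)).attach,
      (((v : ℕ).choose i.1 : ℚ) * μ ^ ((v : ℕ) - i.1)) •
        X (⟨i.1, by have := Finset.mem_range.mp i.2; have := v.isLt; omega⟩ : Fin (m + 1))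

/-- The exponential-like lift: `x_n ↦ ∑ C(n,i) x_i T^(n-i)` in `S[T]`. -/
noncomputable def PhiW (m : ℕ) :
    MvPolynomial (Fin (m + 1)) ℚ →ₐ[ℚ] Polynomial (MvPolynomial (Fin (m + 1)) ℚ) :=
  aeval fun v : Fin (m + 1) =>
    ∑ i ∈ (Finset.range ((v : ℕ) + 1)).attach,
      (((v : ℕ).choose i.1 : ℚ)) •
        (Polynomial.C (X (⟨i.1, by have := Finset.mem_range.mp i.2; have := v.isLt; omega⟩ :
            Fin (m + 1))) * Polynomial.X ^ ((v : ℕ) - i.1))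

lemma PhiW_X_coeff (m : ℕ) (v : Fin (m + 1)) (k : ℕ) :
    (PhiW m (X v)).coeff k =
      (((v : ℕ).choose k : ℚ)) •
        X (⟨(v : ℕ) - k, by have := v.isLt; omega⟩ : Fin (m + 1)) := by
  rw [PhiW, aeval_X, Polynomial.finset_sum_coeff]
  by_cases hk : k ≤ (v : ℕ)
  · rw [Finset.sum_eq_single
      (⟨(v : ℕ) - k, Finset.mem_range.mpr (by omega)⟩ :
        {x // x ∈ Finset.range ((v : ℕ) + 1)})]
    · rw [Polynomial.coeff_smul, Polynomial.coeff_C_mul, Polynomial.coeff_X_pow]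
      rw [if_pos (by omega : k = (v:ℕ) - ((v:ℕ) - k)), mul_one]
      rw [Nat.choose_symm hk]
    · rintro ⟨i, hi⟩ - hne
      have hi' : i < (v : ℕ) + 1 := Finset.mem_range.mp hi
      have : k ≠ (v : ℕ) - i := by
        intro hkk
        exact hne (by apply Subtype.ext; simp; omega)
      rw [Polynomial.coeff_smul, Polynomial.coeff_C_mul, Polynomial.coeff_X_pow,
        if_neg this, mul_zero, smul_zero]
    · intro habs
      exact absurd (Finset.mem_attach _ _) habs
  · rw [Nat.choose_eq_zero_of_lt (by omega), Nat.cast_zero, zero_smul]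
    apply Finset.sum_eq_zero
    rintro ⟨i, hi⟩ -
    have hi' : i < (v : ℕ) + 1 := Finset.mem_range.mp hi
    rw [Polynomial.coeff_smul, Polynomial.coeff_C_mul, Polynomial.coeff_X_pow,
      if_neg (by omega), mul_zero, smul_zero]

lemma PhiW_coeff_zero (m : ℕ) (f : MvPolynomial (Fin (m + 1)) ℚ) :
    (PhiW m f).coeff 0 = f := by
  induction f using MvPolynomial.induction_on with
  | C a => simp [PhiW, aeval_C, algebraMap_eq, Polynomial.algebraMap_apply]
  | add p q hp hq => simp [map_add, hp, hq]
  | mul_X p v hp =>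
      rw [map_mul, Polynomial.mul_coeff_zero, hp, PhiW_X_coeff]
      simp


lemma PhiW_C (m : ℕ) (a : ℚ) : PhiW m (C a) = Polynomial.C (C a) := by
  rw [← MvPolynomial.algebraMap_eq, AlgHom.commutes, Polynomial.algebraMap_apply,
    MvPolynomial.algebraMap_eq]

lemma binomialSubst_C (m : ℕ) (μ : ℚ) (a : ℚ) : binomialSubst m μ (C a) = C a := by
  rw [← MvPolynomial.algebraMap_eq, AlgHom.commutes, MvPolynomial.algebraMap_eq]

lemma coeff_one_mul' {R : Type*} [CommSemiring R] (a b : Polynomial R) :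
    (a * b).coeff 1 = a.coeff 0 * b.coeff 1 + a.coeff 1 * b.coeff 0 := by
  rw [Polynomial.coeff_mul]
  rw [show (1:ℕ) = 0 + 1 from rfl, Finset.Nat.antidiagonal_succ]
  rw [Finset.sum_cons, Finset.sum_map]
  simp [add_comm]

section withD

variable (m : ℕ)
  (D : Derivation ℚ (MvPolynomial (Fin (m + 1)) ℚ) (MvPolynomial (Fin (m + 1)) ℚ))
  (hDX : ∀ v : Fin (m + 1),
    D (X v) = ((v : ℕ) : ℚ) • X (⟨(v : ℕ) - 1, Nat.lt_of_le_of_lt (Nat.sub_le _ _) v.isLt⟩ : Fin (m + 1)))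

include hDX

lemma D_eq_coeff_one (f : MvPolynomial (Fin (m + 1)) ℚ) :
    D f = (PhiW m f).coeff 1 := by
  induction f using MvPolynomial.induction_on with
  | C a =>
      rw [PhiW_C, Polynomial.coeff_C, if_neg one_ne_zero, ← algebraMap_eq,
        Derivation.map_algebraMap]
  | add p q hp hq => simp [map_add, hp, hq]
  | mul_X p v hp =>
      rw [Derivation.leibniz, map_mul, coeff_one_mul', PhiW_coeff_zero, PhiW_coeff_zero,
        PhiW_X_coeff, hDX v, hp, smul_eq_mul, smul_eq_mul, Nat.choose_one_right]
      ring

set_option maxHeartbeats 1000000 in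
lemma derivative_PhiW (f : MvPolynomial (Fin (m + 1)) ℚ) :
    Polynomial.derivative (PhiW m f) = PhiW m (D f) := by
  induction f using MvPolynomial.induction_on with
  | C a =>
      have hda : D (C a) = 0 := by rw [← algebraMap_eq, Derivation.map_algebraMap]
      rw [hda, map_zero, PhiW_C, Polynomial.derivative_C]
  | add p q hp hq => simp [map_add, hp, hq]
  | mul_X p v hp =>
      have hgen : Polynomial.derivative (PhiW m (X v)) = PhiW m (D (X v)) := by
        apply Polynomial.ext
        intro n
        rw [Polynomial.coeff_derivative, PhiW_X_coeff, hDX v, map_smul,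
          Polynomial.coeff_smul, PhiW_X_coeff]
        have hidx : ((⟨(v : ℕ) - (n + 1), by have := v.isLt; omega⟩ : Fin (m + 1)))
            = (⟨((v : ℕ) - 1) - n, by have := v.isLt; omega⟩ : Fin (m + 1)) := by
          apply Fin.ext; simp; omega
        rw [hidx, smul_smul]
        have hc : ((n : MvPolynomial (Fin (m+1)) ℚ) + 1) = C ((n : ℚ) + 1) := by
          rw [map_add, map_one, map_natCast]
        rw [hc, mul_comm _ (C ((n : ℚ) + 1)), ← smul_eq_C_mul, smul_smul]
        congr 1
        have hnat : (n + 1) * ((v : ℕ).choose (n+1)) = (v : ℕ) * (((v : ℕ)-1).choose n) := by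
          rcases Nat.eq_zero_or_pos (v : ℕ) with hv | hv
          · simp [hv]
          · have hs := Nat.add_one_mul_choose_eq ((v : ℕ) - 1) n
            have h2 : ((v : ℕ) - 1) + 1 = (v : ℕ) := by omega
            rw [h2] at hs
            exact (mul_comm _ _).trans hs.symm
        exact_mod_cast congrArg (fun t : ℕ => (t : ℚ)) hnat
      rw [map_mul, Polynomial.derivative_mul, Derivation.leibniz, map_add, smul_eq_mul,
        smul_eq_mul, map_mul, map_mul, hp, hgen]
      ring

omit hDX in
lemma eval_PhiW (μ : ℚ) (f : MvPolynomial (Fin (m + 1)) ℚ) :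
    (PhiW m f).eval (C μ) = binomialSubst m μ f := by
  induction f using MvPolynomial.induction_on with
  | C a => rw [PhiW_C, Polynomial.eval_C, binomialSubst_C]
  | add p q hp hq => simp [map_add, hp, hq]
  | mul_X p v hp =>
      rw [map_mul, map_mul, Polynomial.eval_mul, hp]
      congr 1
      rw [PhiW, binomialSubst, aeval_X, aeval_X, Polynomial.eval_finset_sum]
      apply Finset.sum_congr rfl
      rintro ⟨i, hi⟩ -
      rw [Polynomial.eval_smul, Polynomial.eval_mul, Polynomial.eval_C,
        Polynomial.eval_pow, Polynomial.eval_X, ← map_pow, mul_comm, ← smul_eq_C_mul,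
        smul_smul]

end withD

/-- A polynomial is invariant under all μ-binomial substitutions if and only if it is
annihilated by the basic Weitzenböck derivation. -/
theorem binomialSubst_invariant_iff_weitzenbock (m : ℕ)
    (D : Derivation ℚ (MvPolynomial (Fin (m + 1)) ℚ) (MvPolynomial (Fin (m + 1)) ℚ))
    (h0 : D (X (⟨0, by omega⟩ : Fin (m + 1))) = 0)
    (h : ∀ i : Fin (m + 1), 1 ≤ (i : ℕ) →
      D (X i) = ((i : ℕ) : ℚ) • X (⟨(i : ℕ) - 1, by have := i.isLt; omega⟩ : Fin (m + 1)))
    (f : MvPolynomial (Fin (m + 1)) ℚ) :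
    (∀ μ : ℚ, binomialSubst m μ f = f) ↔ D f = 0 := by
  have hDX : ∀ v : Fin (m + 1),
      D (X v) = ((v : ℕ) : ℚ) • X (⟨(v : ℕ) - 1, by have := v.isLt; omega⟩ : Fin (m + 1)) := by
    intro v
    rcases Nat.eq_zero_or_pos (v : ℕ) with hv | hv
    · have hx : (X v : MvPolynomial (Fin (m + 1)) ℚ) = X ⟨0, by omega⟩ := by
        congr 1; exact Fin.ext hv
      have hc0 : (((v : ℕ) : ℚ)) = 0 := by rw [hv]; norm_num
      rw [hx, h0, hc0, zero_smul]
    · exact h v hv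
  constructor
  · intro hf
    rw [D_eq_coeff_one m D hDX f]
    apply MvPolynomial.funext
    intro c
    have key : ∀ μ : ℚ, ((PhiW m f).map (eval c)).eval μ = eval c f := by
      intro μ
      rw [Polynomial.eval_map, show μ = (eval c) (C μ) by simp,
        Polynomial.eval₂_at_apply, eval_PhiW m, hf μ]
    have hzero : (PhiW m f).map (eval c) = Polynomial.C (eval c f) :=
      Polynomial.funext fun μ => by rw [key μ, Polynomial.eval_C]
    have := congrArg (fun p => Polynomial.coeff p 1) hzero
    simpa [Polynomial.coeff_map] using this
  · intro hDf μ
    have h4 := derivative_PhiW m D hDX f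
    rw [hDf, map_zero] at h4
    have h5 := Polynomial.eq_C_of_derivative_eq_zero h4
    rw [← eval_PhiW m, h5, PhiW_coeff_zero, Polynomial.eval_C]
end

section
/- The transvectant transformation is invariant under the μ-binomial transform applied to both arguments: for all sequences a, c : ℕ → ℚ, all μ ∈ ℚ and all n, if b_m = Σ_{i=0}^{m} C(m,i) μ^{m-i} a_i and d_m = Σ_{i=0}^{m} C(m,i) μ^{m-i} c_i, then Σ_{i=0}^{n} (−1)^i C(n,i) b_i d_{n-i} = Σ_{i=0}^{n} (−1)^i C(n,i) a_i c_{n-i}. -/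
open PowerSeries Finset Nat

private lemma fact_ne (k : ℕ) : (k ! : ℚ) ≠ 0 := by exact_mod_cast k.factorial_ne_zero

/-- EGF of a μ-binomial transform equals `e^{μx} · EGF(a)`. -/
private lemma egf_transform (a b : ℕ → ℚ) (μ : ℚ)
    (hb : ∀ m, b m = ∑ i ∈ Finset.range (m + 1), (m.choose i : ℚ) * μ ^ (m - i) * a i) :
    PowerSeries.mk (fun m => b m / m !) =
      PowerSeries.rescale μ (PowerSeries.exp ℚ) * PowerSeries.mk (fun m => a m / m !) := by
  ext n
  rw [coeff_mk, coeff_mul, Finset.Nat.sum_antidiagonal_eq_sum_range_succ_mk, hb,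
    ← Finset.sum_range_reflect, Finset.sum_div]
  simp only [Nat.add_sub_cancel]
  refine Finset.sum_congr rfl fun i hi => ?_
  have hin : i ≤ n := Nat.lt_succ_iff.mp (Finset.mem_range.mp hi)
  rw [coeff_rescale, coeff_exp, coeff_mk, Nat.choose_symm hin, Nat.sub_sub_self hin,
    Nat.cast_choose ℚ hin]
  have h1 := fact_ne i
  have h2 := fact_ne (n - i)
  have h3 := fact_ne n
  simp only [eq_ratCast, Rat.cast_div, Rat.cast_one, Rat.cast_natCast]
  field_simp

/-- transvectant as coefficient of a power-series product. -/
private lemma transvectant_coeff (x y : ℕ → ℚ) (n : ℕ) :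
    ∑ i ∈ Finset.range (n + 1), (-1 : ℚ) ^ i * (n.choose i : ℚ) * x i * y (n - i)
      = (n ! : ℚ) * (PowerSeries.coeff n)
          (PowerSeries.rescale (-1) (PowerSeries.mk fun m => x m / m !)
            * PowerSeries.mk (fun m => y m / m !)) := by
  rw [coeff_mul, Finset.Nat.sum_antidiagonal_eq_sum_range_succ_mk, Finset.mul_sum]
  refine Finset.sum_congr rfl fun i hi => ?_
  have hin : i ≤ n := Nat.lt_succ_iff.mp (Finset.mem_range.mp hi)
  rw [coeff_rescale, coeff_mk, coeff_mk, Nat.cast_choose ℚ hin]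
  have h1 := fact_ne i
  have h2 := fact_ne (n - i)
  have h3 := fact_ne n
  field_simp

/-- The transvectant transformation is invariant under the μ-binomial transform
applied to both arguments. -/
theorem transvectant_binomial_invariant (a c : ℕ → ℚ) (μ : ℚ) (n : ℕ) (b d : ℕ → ℚ)
    (hb : ∀ m, b m = ∑ i ∈ Finset.range (m + 1), (m.choose i : ℚ) * μ ^ (m - i) * a i)
    (hd : ∀ m, d m = ∑ i ∈ Finset.range (m + 1), (m.choose i : ℚ) * μ ^ (m - i) * c i) :
    ∑ i ∈ Finset.range (n + 1), (-1 : ℚ) ^ i * (n.choose i : ℚ) * b i * d (n - i)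
      = ∑ i ∈ Finset.range (n + 1), (-1 : ℚ) ^ i * (n.choose i : ℚ) * a i * c (n - i) := by
  rw [transvectant_coeff, transvectant_coeff]
  congr 1
  rw [egf_transform a b μ hb, egf_transform c d μ hd, map_mul (PowerSeries.rescale (-1 : ℚ))]
  have hr : PowerSeries.rescale (-1 : ℚ) (PowerSeries.rescale μ (PowerSeries.exp ℚ))
      = PowerSeries.rescale (-μ) (PowerSeries.exp ℚ) := by
    rw [PowerSeries.rescale_rescale]
    congr 1
    ring_nf
  rw [hr]
  have key : PowerSeries.rescale (-μ) (PowerSeries.exp ℚ) * PowerSeries.rescale μ (PowerSeries.exp ℚ) = 1 := by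
    rw [PowerSeries.exp_mul_exp_eq_exp_add, neg_add_cancel]
    rw [PowerSeries.rescale_zero]
    simp [PowerSeries.constantCoeff_exp]
  congr 1
  calc PowerSeries.rescale (-μ) (exp ℚ) * PowerSeries.rescale (-1) (mk fun m => a m / ↑m !)
        * (PowerSeries.rescale μ (exp ℚ) * mk fun m => c m / ↑m !)
      = (PowerSeries.rescale (-μ) (exp ℚ) * PowerSeries.rescale μ (exp ℚ))
        * (PowerSeries.rescale (-1) (mk fun m => a m / ↑m !) * mk fun m => c m / ↑m !) := by ring
    _ = _ := by rw [key, one_mul]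
end

section
/- The Cayley transformation is invariant under the μ-binomial transform: for every sequence a : ℕ → ℚ, every μ ∈ ℚ and every k ≥ 2, if b_m = Σ_{i=0}^{m} C(m,i) μ^{m-i} a_i, then Σ_{i=0}^{k-2} (−1)^i C(k,i) b_{k-i} b_1^i b_0^{k-i-1} + (k−1)(−1)^{k+1} b_1^k = Σ_{i=0}^{k-2} (−1)^i C(k,i) a_{k-i} a_1^i a_0^{k-i-1} + (k−1)(−1)^{k+1} a_1^k. -/
lemma alt_choose_sum (n : ℕ) :
    ∑ i ∈ Finset.range (n+1), (-1:ℚ)^i * (n.choose i : ℚ) = if n = 0 then 1 else 0 := by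
  have h := Int.alternating_sum_range_choose (n := n)
  have h2 := congrArg (fun z : ℤ => (z : ℚ)) h
  push_cast at h2
  split_ifs with hn <;> simp [hn] at h2 ⊢ <;> convert h2 using 2

lemma alt_choose_sum2 (n s : ℕ) :
    ∑ i ∈ Finset.range (n+1), (-1:ℚ)^i * (n.choose i : ℚ) * (i.choose s : ℚ)
      = if s = n then (-1:ℚ)^n else 0 := by
  by_cases hs : s ≤ n
  · rw [Finset.range_eq_Ico, ← Finset.sum_Ico_consecutive _ (Nat.zero_le s) (by omega : s ≤ n+1)]
    have h1 : ∑ i ∈ Finset.Ico 0 s, (-1:ℚ)^i * (n.choose i : ℚ) * (i.choose s : ℚ) = 0 := by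
      refine Finset.sum_eq_zero fun i hi => ?_
      rw [Finset.mem_Ico] at hi
      simp [Nat.choose_eq_zero_of_lt hi.2]
    rw [h1, zero_add, Finset.sum_Ico_eq_sum_range]
    have h2 : ∀ t ∈ Finset.range (n+1-s),
        (-1:ℚ)^(s+t) * (n.choose (s+t) : ℚ) * ((s+t).choose s : ℚ)
        = ((-1:ℚ)^s * (n.choose s : ℚ)) * ((-1:ℚ)^t * ((n-s).choose t : ℚ)) := by
      intro t ht
      rw [Finset.mem_range] at ht
      have hc := Nat.choose_mul (n := n) (Nat.le_add_right s t)
      have hc' : ((n.choose (s+t) : ℚ)) * ((s+t).choose s : ℚ)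
          = (n.choose s : ℚ) * ((n-s).choose (s+t-s) : ℚ) := by exact_mod_cast hc
      rw [Nat.add_sub_cancel_left] at hc'
      rw [pow_add]
      calc (-1:ℚ)^s * (-1:ℚ)^t * (n.choose (s+t) : ℚ) * ((s+t).choose s : ℚ)
          = (-1:ℚ)^s * (-1:ℚ)^t * ((n.choose (s+t) : ℚ) * ((s+t).choose s : ℚ)) := by ring
        _ = (-1:ℚ)^s * (-1:ℚ)^t * ((n.choose s : ℚ) * ((n-s).choose t : ℚ)) := by rw [hc']
        _ = ((-1:ℚ)^s * (n.choose s : ℚ)) * ((-1:ℚ)^t * ((n-s).choose t : ℚ)) := by ring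
    rw [Finset.sum_congr rfl h2, ← Finset.mul_sum]
    rw [show n+1-s = (n-s)+1 by omega, alt_choose_sum (n-s)]
    by_cases h : s = n
    · subst h; simp
    · rw [if_neg (by omega), if_neg h, mul_zero]
  · rw [if_neg (by omega)]
    refine Finset.sum_eq_zero fun i hi => ?_
    rw [Finset.mem_range] at hi
    simp [Nat.choose_eq_zero_of_lt (show i < s by omega)]

lemma choose_tri {k i j : ℕ} (hik : i ≤ k) (hjk : j ≤ k) :
    (k.choose i) * ((k-i).choose j) = (k.choose j) * ((k-j).choose i) := by
  by_cases h : j ≤ k - i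
  · have h1 := Nat.choose_mul (n := k) h
    rw [Nat.choose_symm hik] at h1
    rw [h1]
    congr 1
    rw [show (k - i) - j = (k - j) - i by omega, Nat.choose_symm (by omega : i ≤ k - j)]
  · rw [Nat.choose_eq_zero_of_lt (show k - i < j by omega),
        Nat.choose_eq_zero_of_lt (show k - j < i by omega), mul_zero, mul_zero]

lemma triple_reorder (k : ℕ) (c : ℕ → ℕ → ℕ → ℚ) (w : ℕ → ℕ → ℚ) :
    ∑ i ∈ Finset.range k, ∑ j ∈ Finset.range (k+1), ∑ s ∈ Finset.range (k+1), c i j s * w j s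
    = ∑ j ∈ Finset.range (k+1), ∑ s ∈ Finset.range (k+1),
        (∑ i ∈ Finset.range k, c i j s) * w j s := by
  rw [Finset.sum_comm]
  refine Finset.sum_congr rfl fun j _ => ?_
  rw [Finset.sum_comm]
  exact Finset.sum_congr rfl fun s _ => (Finset.sum_mul _ _ _).symm

lemma coef_pos (k j s : ℕ) (hj1 : 1 ≤ j) (hjk : j ≤ k) :
    ∑ i ∈ Finset.range k,
        (-1:ℚ)^i * (k.choose i : ℚ) * (((k-i).choose j : ℚ)) * ((i.choose s : ℚ))
    = if s = k - j then (-1:ℚ)^(k-j) * (k.choose j : ℚ) else 0 := by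
  have h1 : ∀ i ∈ Finset.range k,
      (-1:ℚ)^i * (k.choose i : ℚ) * (((k-i).choose j : ℚ)) * ((i.choose s : ℚ))
      = (k.choose j : ℚ) * ((-1:ℚ)^i * (((k-j).choose i : ℚ)) * ((i.choose s : ℚ))) := by
    intro i hi; rw [Finset.mem_range] at hi
    have h := choose_tri (show i ≤ k by omega) hjk
    have h' : ((k.choose i : ℚ)) * (((k-i).choose j : ℚ))
        = (k.choose j : ℚ) * (((k-j).choose i : ℚ)) := by exact_mod_cast h
    calc (-1:ℚ)^i * (k.choose i : ℚ) * (((k-i).choose j : ℚ)) * ((i.choose s : ℚ))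
        = ((k.choose i : ℚ) * (((k-i).choose j : ℚ))) * ((-1:ℚ)^i * ((i.choose s : ℚ))) := by
          ring
      _ = ((k.choose j : ℚ) * (((k-j).choose i : ℚ))) * ((-1:ℚ)^i * ((i.choose s : ℚ))) := by
          rw [h']
      _ = _ := by ring
  rw [Finset.sum_congr rfl h1, ← Finset.mul_sum]
  rw [show (∑ i ∈ Finset.range k, (-1:ℚ)^i * (((k-j).choose i : ℚ)) * ((i.choose s : ℚ)))
      = ∑ i ∈ Finset.range (k-j+1), (-1:ℚ)^i * (((k-j).choose i : ℚ)) * ((i.choose s : ℚ)) from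
    (Finset.sum_subset (Finset.range_subset_range.mpr (by omega)) fun i hi hni => by
      rw [Finset.mem_range] at hi hni
      simp [Nat.choose_eq_zero_of_lt (show k - j < i by omega)]).symm]
  rw [alt_choose_sum2 (k-j) s]
  split_ifs <;> ring

lemma coef_zero (k s : ℕ) :
    ∑ i ∈ Finset.range k,
        (-1:ℚ)^i * (k.choose i : ℚ) * (((k-i).choose 0 : ℚ)) * ((i.choose s : ℚ))
    = (if s = k then (-1:ℚ)^k else 0) - (-1:ℚ)^k * (k.choose s : ℚ) := by
  have h := alt_choose_sum2 k s
  rw [Finset.sum_range_succ] at h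
  simp only [Nat.choose_zero_right, Nat.cast_one, mul_one, Nat.choose_self, one_mul] at h ⊢
  linarith [h]

lemma step1 (a : ℕ → ℚ) (μ : ℚ) (k i : ℕ) (b : ℕ → ℚ)
    (hb : ∀ m, b m = ∑ i ∈ Finset.range (m + 1), (m.choose i : ℚ) * μ ^ (m - i) * a i)
    (hb1 : b 1 = a 1 + μ * a 0) (hi : i < k) :
    (-1:ℚ)^i * (k.choose i : ℚ) * b (k-i) * b 1 ^ i * a 0 ^ (k - i - 1)
    = ∑ j ∈ Finset.range (k+1), ∑ s ∈ Finset.range (k+1),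
        ((-1:ℚ)^i * (k.choose i : ℚ) * (((k-i).choose j : ℚ)) * ((i.choose s : ℚ))) *
          (μ ^ (k - j - s) * a j * a 1 ^ s * a 0 ^ (k - s - 1)) := by
  rw [hb (k-i), hb1, add_pow]
  simp only [Finset.mul_sum, Finset.sum_mul]
  rw [Finset.sum_comm]
  symm
  refine ((Finset.sum_subset (Finset.range_subset_range.mpr
      (show k - i + 1 ≤ k + 1 by omega)) ?_).symm).trans ?_
  · intro j hj hj2
    rw [Finset.mem_range] at hj hj2
    refine Finset.sum_eq_zero fun s hs => ?_
    simp [Nat.choose_eq_zero_of_lt (show k - i < j by omega)]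
  · refine Finset.sum_congr rfl fun j hj => ?_
    rw [Finset.mem_range] at hj
    refine ((Finset.sum_subset (Finset.range_subset_range.mpr
        (show i + 1 ≤ k + 1 by omega)) ?_).symm).trans ?_
    · intro s hs hs2
      rw [Finset.mem_range] at hs hs2
      simp [Nat.choose_eq_zero_of_lt (show i < s by omega)]
    · refine Finset.sum_congr rfl fun s hs => ?_
      rw [Finset.mem_range] at hs
      rw [show k - j - s = (k - i - j) + (i - s) by omega,
          show k - s - 1 = (k - i - 1) + (i - s) by omega, pow_add, pow_add, mul_pow]
      ring

lemma key (a : ℕ → ℚ) (μ : ℚ) (k : ℕ) (hk : 1 ≤ k) (b : ℕ → ℚ)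
    (hb : ∀ m, b m = ∑ i ∈ Finset.range (m + 1), (m.choose i : ℚ) * μ ^ (m - i) * a i) :
    (∑ i ∈ Finset.range k, (-1:ℚ)^i * (k.choose i : ℚ) * b (k-i) * b 1 ^ i * a 0 ^ (k - i - 1))
      + (-1:ℚ)^k * b 1 ^ k
    = (∑ i ∈ Finset.range k, (-1:ℚ)^i * (k.choose i : ℚ) * a (k-i) * a 1 ^ i * a 0 ^ (k - i - 1))
      + (-1:ℚ)^k * a 1 ^ k := by
  have hb1 : b 1 = a 1 + μ * a 0 := by
    rw [hb 1, Finset.sum_range_succ, Finset.sum_range_one]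
    norm_num
    ring
  have main : (∑ i ∈ Finset.range k,
        (-1:ℚ)^i * (k.choose i : ℚ) * b (k-i) * b 1 ^ i * a 0 ^ (k - i - 1))
      = (∑ i ∈ Finset.range k,
          (-1:ℚ)^i * (k.choose i : ℚ) * a (k-i) * a 1 ^ i * a 0 ^ (k - i - 1))
        - (-1:ℚ)^k * (b 1 ^ k - a 1 ^ k) := by
    calc (∑ i ∈ Finset.range k,
          (-1:ℚ)^i * (k.choose i : ℚ) * b (k-i) * b 1 ^ i * a 0 ^ (k - i - 1))
        = ∑ i ∈ Finset.range k, ∑ j ∈ Finset.range (k+1), ∑ s ∈ Finset.range (k+1),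
            ((-1:ℚ)^i * (k.choose i : ℚ) * (((k-i).choose j : ℚ)) * ((i.choose s : ℚ))) *
              (μ ^ (k - j - s) * a j * a 1 ^ s * a 0 ^ (k - s - 1)) :=
          Finset.sum_congr rfl fun i hi => step1 a μ k i b hb hb1 (Finset.mem_range.mp hi)
      _ = ∑ j ∈ Finset.range (k+1), ∑ s ∈ Finset.range (k+1),
            (∑ i ∈ Finset.range k,
              (-1:ℚ)^i * (k.choose i : ℚ) * (((k-i).choose j : ℚ)) * ((i.choose s : ℚ))) *
              (μ ^ (k - j - s) * a j * a 1 ^ s * a 0 ^ (k - s - 1)) := by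
          exact triple_reorder k
            (fun i j s => (-1:ℚ)^i * (k.choose i : ℚ) * (((k-i).choose j : ℚ)) * ((i.choose s : ℚ)))
            (fun j s => μ ^ (k - j - s) * a j * a 1 ^ s * a 0 ^ (k - s - 1))
      _ = (∑ j' ∈ Finset.range k, ∑ s ∈ Finset.range (k+1),
            (∑ i ∈ Finset.range k,
              (-1:ℚ)^i * (k.choose i : ℚ) * (((k-i).choose (j'+1) : ℚ)) * ((i.choose s : ℚ))) *
              (μ ^ (k - (j'+1) - s) * a (j'+1) * a 1 ^ s * a 0 ^ (k - s - 1)))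
          + (∑ s ∈ Finset.range (k+1),
            (∑ i ∈ Finset.range k,
              (-1:ℚ)^i * (k.choose i : ℚ) * (((k-i).choose 0 : ℚ)) * ((i.choose s : ℚ))) *
              (μ ^ (k - 0 - s) * a 0 * a 1 ^ s * a 0 ^ (k - s - 1))) :=
          Finset.sum_range_succ' _ k
      _ = (∑ i ∈ Finset.range k,
            (-1:ℚ)^i * (k.choose i : ℚ) * a (k-i) * a 1 ^ i * a 0 ^ (k - i - 1))
          + (-((-1:ℚ)^k * (b 1 ^ k - a 1 ^ k))) := by
          congr 1
          · -- positive j part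
            have h1 : ∀ j' ∈ Finset.range k,
                (∑ s ∈ Finset.range (k+1),
                  (∑ i ∈ Finset.range k,
                    (-1:ℚ)^i * (k.choose i : ℚ) * (((k-i).choose (j'+1) : ℚ)) * ((i.choose s : ℚ))) *
                    (μ ^ (k - (j'+1) - s) * a (j'+1) * a 1 ^ s * a 0 ^ (k - s - 1)))
                = (-1:ℚ)^(k-(j'+1)) * (k.choose (j'+1) : ℚ) *
                    (μ ^ (k - (j'+1) - (k-(j'+1))) * a (j'+1) * a 1 ^ (k-(j'+1)) *
                      a 0 ^ (k - (k-(j'+1)) - 1)) := by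
              intro j' hj'
              rw [Finset.mem_range] at hj'
              rw [Finset.sum_congr rfl (fun s _ => by
                rw [coef_pos k (j'+1) s (by omega) (by omega)])]
              simp only [ite_mul, zero_mul, Finset.sum_ite_eq']
              rw [if_pos (Finset.mem_range.mpr (by omega))]
            rw [Finset.sum_congr rfl h1]
            conv_rhs => rw [← Finset.sum_range_reflect]
            refine Finset.sum_congr rfl fun j' hj' => ?_
            rw [Finset.mem_range] at hj'
            have c1 : ((k.choose (k-1-j') : ℕ) : ℚ) = ((k.choose (j'+1) : ℕ) : ℚ) := by
              rw [show k-1-j' = k - (j'+1) by omega, Nat.choose_symm (by omega)]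
            rw [show k-(j'+1)-(k-(j'+1)) = 0 by omega,
                show k-(k-(j'+1))-1 = j' by omega,
                show k-(k-1-j')-1 = j' by omega,
                show k-(k-1-j') = j'+1 by omega,
                show k-(j'+1) = k-1-j' by omega, c1, pow_zero]
            ring
          · -- j = 0 part
            rw [Finset.sum_congr rfl (fun s _ => by rw [coef_zero k s])]
            simp only [sub_mul]
            rw [Finset.sum_sub_distrib]
            have hA : (∑ s ∈ Finset.range (k+1),
                (if s = k then (-1:ℚ)^k else 0) *
                  (μ ^ (k - 0 - s) * a 0 * a 1 ^ s * a 0 ^ (k - s - 1)))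
                = (-1:ℚ)^k * (a 0 * a 1 ^ k) := by
              simp only [ite_mul, zero_mul, Finset.sum_ite_eq']
              rw [if_pos (Finset.self_mem_range_succ k)]
              rw [show k - 0 - k = 0 by omega, show k - k - 1 = 0 by omega]
              ring
            have hB : (∑ s ∈ Finset.range (k+1),
                ((-1:ℚ)^k * (k.choose s : ℚ)) *
                  (μ ^ (k - 0 - s) * a 0 * a 1 ^ s * a 0 ^ (k - s - 1)))
                = (-1:ℚ)^k * (b 1 ^ k - a 1 ^ k + a 0 * a 1 ^ k) := by
              have hbk : b 1 ^ k
                  = ∑ s ∈ Finset.range (k+1), a 1 ^ s * (μ * a 0) ^ (k-s) * (k.choose s : ℚ) := by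
                rw [hb1, add_pow]
              rw [Finset.sum_range_succ] at hbk
              rw [Finset.sum_range_succ,
                  show k - 0 - k = 0 by omega, show k - k - 1 = 0 by omega]
              have h2 : ∑ s ∈ Finset.range k,
                  ((-1:ℚ)^k * (k.choose s : ℚ)) *
                    (μ ^ (k - 0 - s) * a 0 * a 1 ^ s * a 0 ^ (k - s - 1))
                  = (-1:ℚ)^k * ∑ s ∈ Finset.range k,
                      a 1 ^ s * (μ * a 0) ^ (k-s) * (k.choose s : ℚ) := by
                rw [Finset.mul_sum]
                refine Finset.sum_congr rfl fun s hs => ?_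
                rw [Finset.mem_range] at hs
                obtain ⟨t, ht⟩ : ∃ t, k - s = t + 1 := ⟨k - s - 1, by omega⟩
                rw [show (k:ℕ) - 0 - s = k - s by omega, ht,
                    show t + 1 - 1 = t by omega, mul_pow]
                ring
              rw [h2]
              have h3 : ∑ s ∈ Finset.range k, a 1 ^ s * (μ * a 0) ^ (k-s) * (k.choose s : ℚ)
                  = b 1 ^ k - a 1 ^ k := by
                rw [hbk]
                simp
              rw [h3]
              simp [Nat.choose_self]
              try ring
            rw [hA, hB]
            ring
      _ = (∑ i ∈ Finset.range k,
            (-1:ℚ)^i * (k.choose i : ℚ) * a (k-i) * a 1 ^ i * a 0 ^ (k - i - 1))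
          - (-1:ℚ)^k * (b 1 ^ k - a 1 ^ k) := by ring
  linarith [main]

/-- The Cayley transformation is invariant under the μ-binomial transform. -/
theorem cayley_binomial_invariant (a : ℕ → ℚ) (μ : ℚ) (k : ℕ) (hk : 2 ≤ k) (b : ℕ → ℚ)
    (hb : ∀ m, b m = ∑ i ∈ Finset.range (m + 1), (m.choose i : ℚ) * μ ^ (m - i) * a i) :
    (∑ i ∈ Finset.range (k - 1), (-1 : ℚ) ^ i * (k.choose i : ℚ) *
        b (k - i) * b 1 ^ i * b 0 ^ (k - i - 1))
      + ((k : ℚ) - 1) * (-1 : ℚ) ^ (k + 1) * b 1 ^ k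
    = (∑ i ∈ Finset.range (k - 1), (-1 : ℚ) ^ i * (k.choose i : ℚ) *
        a (k - i) * a 1 ^ i * a 0 ^ (k - i - 1))
      + ((k : ℚ) - 1) * (-1 : ℚ) ^ (k + 1) * a 1 ^ k := by
  have hb0 : b 0 = a 0 := by rw [hb 0]; simp
  obtain ⟨m, rfl⟩ : ∃ m, k = m + 2 := ⟨k - 2, by omega⟩
  have H := key a μ (m+2) (by omega) b hb
  rw [Finset.sum_range_succ
        (fun i => (-1:ℚ)^i * (((m+2).choose i : ℕ) : ℚ) * b (m+2-i) * b 1 ^ i * a 0 ^ (m+2-i-1))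
        (m+1),
      Finset.sum_range_succ
        (fun i => (-1:ℚ)^i * (((m+2).choose i : ℕ) : ℚ) * a (m+2-i) * a 1 ^ i * a 0 ^ (m+2-i-1))
        (m+1)] at H
  simp only [Nat.choose_succ_self_right] at H
  try simp only [show m + 2 - (m+1) = 1 by omega] at H
  try simp only [show m + 1 - m = 1 by omega] at H
  simp only [show (1:ℕ) - 1 = 0 by rfl, pow_zero, mul_one] at H
  rw [show m + 2 - 1 = m + 1 by omega]
  simp only [hb0]
  push_cast at H ⊢
  linear_combination H
end

section
/- For every sequence a : ℕ → ℚ and every n ∈ ℕ, the alternating convolution Σ_{i=0}^{2n} (−1)^i a_i a_{2n−i} is invariant under the transformation g_m = Σ_{k=0}^{m} a_{m−k}/k!: that is, Σ_{i=0}^{2n} (−1)^i g_i g_{2n−i} = Σ_{i=0}^{2n} (−1)^i a_i a_{2n−i}. -/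
open PowerSeries Finset

/-- The alternating convolution is invariant under the transformation
`g m = ∑_{k=0}^{m} a (m-k) / k!`. -/
theorem alternating_convolution_invariant (a : ℕ → ℚ) (n : ℕ) (g : ℕ → ℚ)
    (hg : ∀ m, g m = ∑ k ∈ Finset.range (m + 1), a (m - k) / (Nat.factorial k : ℚ)) :
    ∑ i ∈ Finset.range (2 * n + 1), (-1 : ℚ) ^ i * g i * g (2 * n - i)
      = ∑ i ∈ Finset.range (2 * n + 1), (-1 : ℚ) ^ i * a i * a (2 * n - i) := by
  set A : ℚ⟦X⟧ := PowerSeries.mk a with hA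
  set E : ℚ⟦X⟧ := PowerSeries.exp ℚ with hE
  have key : ∀ f : ℚ⟦X⟧, (PowerSeries.coeff (2 * n)) (f * PowerSeries.evalNegHom f)
      = ∑ i ∈ Finset.range (2 * n + 1),
          (-1 : ℚ) ^ i * (PowerSeries.coeff i) f * (PowerSeries.coeff (2 * n - i)) f := by
    intro f
    rw [PowerSeries.coeff_mul, Finset.Nat.sum_antidiagonal_eq_sum_range_succ_mk]
    refine Finset.sum_congr rfl fun i hi => ?_
    have hi' : i ≤ 2 * n := Nat.lt_succ_iff.mp (Finset.mem_range.mp hi)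
    have : (PowerSeries.coeff (2 * n - i)) (PowerSeries.evalNegHom f)
        = (-1 : ℚ) ^ (2 * n - i) * (PowerSeries.coeff (2 * n - i)) f := by
      simp [PowerSeries.evalNegHom, PowerSeries.coeff_rescale]
    rw [this]
    have hpow : ((-1 : ℚ)) ^ (2 * n - i) = (-1 : ℚ) ^ i := by
      have h1 : ((-1 : ℚ)) ^ (2 * n - i) = ((-1 : ℚ)) ^ (2 * n - i) * ((-1 : ℚ) ^ 2) ^ i := by
        simp
      rw [h1, ← pow_mul, ← pow_add]
      have : 2 * n - i + 2 * i = 2 * n + i := by omega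
      rw [this, pow_add]
      simp [pow_mul]
    rw [hpow]; ring
  have hgc : ∀ m, g m = (PowerSeries.coeff m) (E * A) := by
    intro m
    rw [hg m, PowerSeries.coeff_mul, Finset.Nat.sum_antidiagonal_eq_sum_range_succ_mk]
    refine Finset.sum_congr rfl fun k hk => ?_
    simp [hE, hA, PowerSeries.coeff_exp, div_eq_mul_inv, mul_comm]
  have hac : ∀ m, a m = (PowerSeries.coeff m) A := by
    intro m; simp [hA]
  have hEE : E * PowerSeries.evalNegHom E = 1 := PowerSeries.exp_mul_exp_neg_eq_one
  have hmain : (E * A) * PowerSeries.evalNegHom (E * A) = A * PowerSeries.evalNegHom A := by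
    rw [map_mul]
    calc E * A * (PowerSeries.evalNegHom E * PowerSeries.evalNegHom A)
        = (E * PowerSeries.evalNegHom E) * (A * PowerSeries.evalNegHom A) := by ring
      _ = A * PowerSeries.evalNegHom A := by rw [hEE, one_mul]
  calc ∑ i ∈ Finset.range (2 * n + 1), (-1 : ℚ) ^ i * g i * g (2 * n - i)
      = (PowerSeries.coeff (2 * n)) ((E * A) * PowerSeries.evalNegHom (E * A)) := by
        rw [key]; exact Finset.sum_congr rfl fun i _ => by rw [hgc, hgc]
    _ = (PowerSeries.coeff (2 * n)) (A * PowerSeries.evalNegHom A) := by rw [hmain]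
    _ = ∑ i ∈ Finset.range (2 * n + 1), (-1 : ℚ) ^ i * a i * a (2 * n - i) := by
        rw [key]; exact Finset.sum_congr rfl fun i _ => by rw [hac, hac]
end

section
/- For all natural numbers n ≥ 1 and all j with 0 ≤ j ≤ n−1, the following identity holds in ℚ: Σ_{k=j+1}^{n} ((−1)^{k−j+1}/(k−j)) · Sur(n,k) = n · Sur(n−1,j), where Sur(n,k) = Σ_{i=0}^{k} (−1)^i C(k,i) (k−i)^n. (Equivalently, with S(n,k) the Stirling numbers of the second kind and Sur(n,k) = k!·S(n,k), this is the intertwining identity Σ_{k=j+1}^{n} (−1)^{k−j+1} k! S(n,k)/(k−j) = n · j! · S(n−1,j).) -/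
/-- `Sur n k` is the number of surjections from an `n`-set onto a `k`-set,
`Sur n k = ∑_{i=0}^{k} (-1)^i C(k,i) (k-i)^n`, viewed in `ℚ`. -/
noncomputable def Sur (n k : ℕ) : ℚ :=
  ∑ i ∈ Finset.range (k + 1), (-1 : ℚ) ^ i * (k.choose i : ℚ) * ((k - i : ℕ) : ℚ) ^ n

open Finset

lemma sur_zero_succ (k : ℕ) : Sur 0 (k + 1) = 0 := by
  unfold Sur
  have h := Int.alternating_sum_range_choose (n := k + 1)
  rw [if_neg (Nat.succ_ne_zero k)] at h
  have : ((∑ i ∈ range (k + 1 + 1), (-1 : ℤ) ^ i * ((k+1).choose i : ℤ) : ℤ) : ℚ) = 0 := by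
    rw [h]; norm_num
  push_cast at this
  rw [← this]
  apply Finset.sum_congr rfl
  intro i hi
  rw [pow_zero, mul_one]

lemma sur_succ_zero (n : ℕ) : Sur (n + 1) 0 = 0 := by
  unfold Sur; simp

lemma choose_aux (k i : ℕ) (h : i ≤ k) :
    (k + 1 - i) * (k+1).choose i = (k+1) * k.choose i := by
  obtain ⟨m, rfl⟩ := Nat.exists_eq_add_of_le h
  rw [show i + m + 1 - i = m + 1 by omega]
  rw [Nat.choose_symm_of_eq_add (show i + m + 1 = i + (m+1) by omega)]
  rw [mul_comm (m+1) _, ← Nat.add_one_mul_choose_eq (i+m) m]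
  rw [Nat.choose_symm_add]

lemma sur_succ_eq (n k : ℕ) :
    Sur (n+1) (k+1)
      = (k+1) * ∑ i ∈ range (k+1), (-1:ℚ)^i * (k.choose i : ℚ) * ((k+1-i : ℕ) : ℚ)^n := by
  unfold Sur
  rw [Finset.sum_range_succ]
  rw [show (k+1) - (k+1) = 0 by omega]
  rw [Finset.mul_sum]
  simp only [Nat.cast_zero, zero_pow (Nat.succ_ne_zero n), mul_zero, add_zero]
  apply Finset.sum_congr rfl
  intro i hi
  have hik : i ≤ k := Nat.lt_succ_iff.mp (Finset.mem_range.mp hi)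
  have hc : ((k + 1 - i : ℕ) : ℚ) * (((k+1).choose i : ℕ) : ℚ)
      = ((k+1 : ℕ) : ℚ) * ((k.choose i : ℕ) : ℚ) := by
    exact_mod_cast congrArg (fun x : ℕ => (x : ℚ)) (choose_aux k i hik)
  rw [pow_succ]
  push_cast at hc ⊢
  linear_combination ((-1:ℚ)^i * ((k+1-i : ℕ) : ℚ)^n) * hc

lemma sur_pascal (n k : ℕ) :
    Sur n (k+1)
      = (∑ i ∈ range (k+1), (-1:ℚ)^i * (k.choose i : ℚ) * ((k+1-i : ℕ) : ℚ)^n) - Sur n k := by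
  have h1 : Sur n (k+1)
      = (∑ i ∈ range (k+1), ((-1:ℚ)^(i+1) * (k.choose i : ℚ) * ((k-i : ℕ) : ℚ)^n
          + (-1:ℚ)^(i+1) * (k.choose (i+1) : ℚ) * ((k-i : ℕ) : ℚ)^n)) + ((k+1:ℕ):ℚ)^n := by
    unfold Sur
    rw [Finset.sum_range_succ']
    congr 1
    · apply Finset.sum_congr rfl
      intro i hi
      rw [Nat.succ_sub_succ, Nat.choose_succ_succ]
      push_cast
      ring
    · simp
  have h2 : ∑ i ∈ range (k+1), (-1:ℚ)^(i+1) * (k.choose i : ℚ) * ((k-i : ℕ) : ℚ)^n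
      = - Sur n k := by
    unfold Sur
    rw [← Finset.sum_neg_distrib]
    apply Finset.sum_congr rfl
    intro i _
    ring
  have h3 : ∑ i ∈ range (k+1), (-1:ℚ)^i * (k.choose i : ℚ) * ((k+1-i : ℕ) : ℚ)^n
      = (∑ i ∈ range (k+1), (-1:ℚ)^(i+1) * (k.choose (i+1) : ℚ) * ((k-i : ℕ) : ℚ)^n)
        + ((k+1:ℕ):ℚ)^n := by
    rw [Finset.sum_range_succ']
    congr 1
    · rw [Finset.sum_range_succ, Nat.choose_succ_self]
      simp only [Nat.cast_zero, mul_zero, zero_mul, add_zero]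
      apply Finset.sum_congr rfl
      intro i _
      rw [Nat.succ_sub_succ]
    · simp
  rw [h1, Finset.sum_add_distrib, h2, h3]
  ring

lemma sur_rec (n k : ℕ) :
    Sur (n+1) (k+1) = (k+1) * (Sur n k + Sur n (k+1)) := by
  rw [sur_succ_eq, sur_pascal]
  ring

lemma sur_eq_zero_of_lt : ∀ n k : ℕ, n < k → Sur n k = 0 := by
  intro n
  induction n with
  | zero =>
    intro k hk
    obtain ⟨m, rfl⟩ := Nat.exists_eq_add_of_lt hk
    rw [show 0 + m + 1 = m + 1 by omega]
    exact sur_zero_succ m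
  | succ n ih =>
    intro k hk
    obtain ⟨m, hm⟩ := Nat.exists_eq_add_of_lt hk
    subst hm
    rw [show n + 1 + m = (n + m) + 1 by omega, sur_rec]
    rw [ih (n+m+1) (by omega), ih (n+m+1+1) (by omega)]
    ring

noncomputable def aa (t : ℕ) : ℚ := (-1)^t / ((t : ℚ) + 1)

lemma aa_denom (t : ℕ) : ((t : ℚ) + 1) ≠ 0 := by positivity

lemma coeff_id (j t : ℕ) :
    aa (t+1) * ((j:ℚ)+t+2) + aa t * ((j:ℚ)+t+1)
      = (j:ℚ) * aa t + (j:ℚ) * aa (t+1) := by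
  unfold aa
  have h1 := aa_denom t
  have h2 := aa_denom (t+1)
  push_cast at h1 h2 ⊢
  rw [pow_succ]
  field_simp
  ring

lemma L_eq : ∀ n j : ℕ, (∑ t ∈ range n, aa t * Sur n (j+t+1)) = n * Sur (n-1) j := by
  intro n
  induction n with
  | zero => intro j; simp
  | succ n ih =>
    intro j
    have key : ∀ t : ℕ, Sur (n+1) (j+t+1) = ((j:ℚ)+t+1) * (Sur n (j+t) + Sur n (j+t+1)) := by
      intro t
      rw [show j+t+1 = (j+t)+1 from rfl, sur_rec]
      push_cast
      ring
    have hsplit : ∑ t ∈ range (n+1), aa t * Sur (n+1) (j+t+1)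
        = (∑ t ∈ range (n+1), aa t * ((j:ℚ)+t+1) * Sur n (j+t))
          + ∑ t ∈ range (n+1), aa t * ((j:ℚ)+t+1) * Sur n (j+t+1) := by
      rw [← Finset.sum_add_distrib]
      apply Finset.sum_congr rfl
      intro t _
      rw [key t]
      ring
    have hS1 : ∑ t ∈ range (n+1), aa t * ((j:ℚ)+t+1) * Sur n (j+t)
        = (∑ t ∈ range n, aa (t+1) * ((j:ℚ)+t+2) * Sur n (j+t+1)) + ((j:ℚ)+1) * Sur n j := by
      rw [Finset.sum_range_succ']
      congr 1
      · apply Finset.sum_congr rfl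
        intro t _
        have : j + (t+1) = j + t + 1 := by omega
        rw [this]
        push_cast
        ring
      · simp [aa]
    have hS2 : ∑ t ∈ range (n+1), aa t * ((j:ℚ)+t+1) * Sur n (j+t+1)
        = ∑ t ∈ range n, aa t * ((j:ℚ)+t+1) * Sur n (j+t+1) := by
      rw [Finset.sum_range_succ, sur_eq_zero_of_lt n (j+n+1) (by omega)]
      ring
    rw [hsplit, hS1, hS2]
    have hcomb : (∑ t ∈ range n, aa (t+1) * ((j:ℚ)+t+2) * Sur n (j+t+1))
          + ∑ t ∈ range n, aa t * ((j:ℚ)+t+1) * Sur n (j+t+1)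
        = (j:ℚ) * (∑ t ∈ range n, aa t * Sur n (j+t+1))
          + (j:ℚ) * ∑ t ∈ range n, aa (t+1) * Sur n (j+t+1) := by
      rw [← Finset.sum_add_distrib, Finset.mul_sum, Finset.mul_sum, ← Finset.sum_add_distrib]
      apply Finset.sum_congr rfl
      intro t _
      have := coeff_id j t
      linear_combination (Sur n (j+t+1)) * this
    simp only [Nat.add_sub_cancel]
    rcases j with _ | j'
    · have hz : (n:ℚ) * Sur n 0 = 0 := by
        rcases n with _ | m
        · simp
        · rw [sur_succ_zero]; ring
      push_cast
      push_cast at hcomb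
      linear_combination hcomb - hz
    · rcases n with _ | m
      · simp [sur_zero_succ]
      · have hT : ∑ t ∈ range (m+1), aa (t+1) * Sur (m+1) (j'+1+t+1)
            = (∑ t ∈ range (m+1), aa t * Sur (m+1) (j'+t+1)) - Sur (m+1) (j'+1) := by
          rw [Finset.sum_range_succ' (fun t => aa t * Sur (m+1) (j'+t+1)) m]
          rw [Finset.sum_range_succ (fun t => aa (t+1) * Sur (m+1) (j'+1+t+1)) m]
          rw [sur_eq_zero_of_lt (m+1) (j'+1+m+1) (by omega)]
          have he : ∀ t, j' + (t+1) + 1 = j' + 1 + t + 1 := by intro t; omega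
          simp only [he, aa, pow_zero, Nat.cast_zero, zero_add, mul_zero, add_zero]
          ring_nf
          ring
        have ihj := ih (j'+1)
        have ihj' := ih j'
        simp only [Nat.add_sub_cancel] at ihj ihj'
        have hrec := sur_rec m j'
        push_cast at hcomb hT ihj ihj' hrec ⊢
        linear_combination hcomb + ((j':ℚ)+1)*hT + ((j':ℚ)+1)*ihj + ((j':ℚ)+1)*ihj' - ((m:ℚ)+1)*hrec

/-- The intertwining identity
`∑_{k=j+1}^{n} ((-1)^{k-j+1}/(k-j)) · Sur(n,k) = n · Sur(n-1,j)`. -/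
theorem surjection_intertwining (n : ℕ) (hn : 1 ≤ n) (j : ℕ) (hj : j ≤ n - 1) :
    ∑ k ∈ Finset.Icc (j + 1) n, (-1 : ℚ) ^ (k - j + 1) / ((k - j : ℕ) : ℚ) * Sur n k
      = (n : ℚ) * Sur (n - 1) j := by

  have hjn : j + 1 ≤ n := by omega
  have hzero : ∑ k ∈ Ico (n+1) (j+1+n),
      (-1 : ℚ) ^ (k - j + 1) / ((k - j : ℕ) : ℚ) * Sur n k = 0 := by
    apply Finset.sum_eq_zero
    intro k hk
    rw [Finset.mem_Ico] at hk
    rw [sur_eq_zero_of_lt n k (by omega)]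
    ring
  have hsplit := Finset.sum_Ico_consecutive
    (f := fun k => (-1 : ℚ) ^ (k - j + 1) / ((k - j : ℕ) : ℚ) * Sur n k)
    (show j+1 ≤ n+1 by omega) (show n+1 ≤ j+1+n by omega)
  calc ∑ k ∈ Finset.Icc (j + 1) n, (-1 : ℚ) ^ (k - j + 1) / ((k - j : ℕ) : ℚ) * Sur n k
      = ∑ k ∈ Ico (j+1) (n+1), (-1 : ℚ) ^ (k - j + 1) / ((k - j : ℕ) : ℚ) * Sur n k := by
        rw [Finset.Ico_add_one_right_eq_Icc]
    _ = ∑ k ∈ Ico (j+1) (j+1+n), (-1 : ℚ) ^ (k - j + 1) / ((k - j : ℕ) : ℚ) * Sur n k := by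
        rw [← hsplit, hzero, add_zero]
    _ = ∑ t ∈ range n, (-1 : ℚ) ^ ((j+1+t) - j + 1) / (((j+1+t) - j : ℕ) : ℚ) * Sur n (j+1+t) := by
        rw [Finset.sum_Ico_eq_sum_range]
        rw [show j+1+n - (j+1) = n by omega]
    _ = ∑ t ∈ range n, aa t * Sur n (j+t+1) := by
        apply Finset.sum_congr rfl
        intro t _
        rw [show (j+1+t) - j = t + 1 by omega, show j+1+t = j+t+1 by omega]
        unfold aa
        push_cast
        rw [pow_succ, pow_succ]
        ring
    _ = (n : ℚ) * Sur (n - 1) j := L_eq n j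
end

section
/- Let E be the partial-sum-below operator on sequences over ℚ: (E a)_n = Σ_{k=0}^{n−1} a_k. Then for every sequence a : ℕ → ℚ and every n ≥ 1, the logarithm series of the partial-sum transformation evaluates to Σ_{j=1}^{n} ((−1)^{j+1}/j) · (E^j a)_n = Σ_{k=0}^{n−1} a_k/(n−k). -/
/-- The partial-sum-below operator on sequences: `(E a) n = ∑_{k=0}^{n-1} a k`. -/
noncomputable def partialSumBelow (a : ℕ → ℚ) : ℕ → ℚ :=
  fun n => ∑ k ∈ Finset.range n, a k

/-- Hockey stick: `∑_{i<M} C(i,j) = C(M, j+1)`. -/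
lemma sum_range_choose_eq (M j : ℕ) :
    ∑ i ∈ Finset.range M, Nat.choose i j = Nat.choose M (j + 1) := by
  induction M with
  | zero => simp
  | succ M ih => rw [Finset.sum_range_succ, ih, Nat.choose_succ_succ, Nat.add_comm]

/-- Iterated partial sums: `(E^{j+1} a)_n = ∑_{k<n} C(n-k-1, j) a_k`. -/
lemma iterate_partialSumBelow (a : ℕ → ℚ) (j : ℕ) : ∀ n,
    (partialSumBelow^[j + 1] a) n
      = ∑ k ∈ Finset.range n, ((n - k - 1).choose j : ℚ) * a k := by
  induction j with
  | zero => intro n; simp [partialSumBelow]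
  | succ j ih =>
    intro n
    rw [Function.iterate_succ', Function.comp_apply]
    show ∑ m ∈ Finset.range n, (partialSumBelow^[j+1] a) m = _
    simp only [ih]
    simp only [← Nat.Ico_zero_eq_range]
    rw [← Finset.sum_Ico_Ico_comm']
    refine Finset.sum_congr rfl fun k hk => ?_
    rw [Finset.mem_Ico] at hk
    rw [← Finset.sum_mul]
    congr 1
    rw [show Finset.Ico (k+1) n = Finset.Ico (k+1) (k+1+(n-k-1)) by congr 1; omega,
      Finset.sum_Ico_eq_sum_range]
    push_cast [show ∀ i, k + 1 + i - k - 1 = i from fun i => by omega]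
    rw [← Nat.cast_sum, sum_range_choose_eq]
    congr 2
    omega

/-- `∑_{i=0}^{m} (-1)^i C(m,i)/(i+1) = 1/(m+1)`. -/
lemma alt_sum_choose_div (m : ℕ) :
    ∑ i ∈ Finset.range (m + 1), (-1 : ℚ) ^ i * (m.choose i : ℚ) / (i + 1)
      = 1 / (m + 1) := by
  have key : ∀ i, (m.choose i : ℚ) / (i + 1) = ((m+1).choose (i+1) : ℚ) / (m + 1) := by
    intro i
    have h := Nat.add_one_mul_choose_eq m i
    have : ((m+1 : ℕ) : ℚ) * (m.choose i : ℚ) = ((m+1).choose (i+1) : ℚ) * (i+1 : ℕ) := by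
      exact_mod_cast congrArg (Nat.cast : ℕ → ℚ) h
    push_cast at this
    field_simp
    linarith [this]
  have hm1 : ((m:ℚ) + 1) ≠ 0 := by positivity
  calc ∑ i ∈ Finset.range (m + 1), (-1 : ℚ) ^ i * (m.choose i : ℚ) / (i + 1)
      = ∑ i ∈ Finset.range (m + 1), (-1 : ℚ) ^ i * (((m+1).choose (i+1) : ℚ) / (m + 1)) := by
        refine Finset.sum_congr rfl fun i _ => ?_
        rw [mul_div_assoc, key i]
    _ = (∑ i ∈ Finset.range (m + 1), (-1 : ℚ) ^ i * ((m+1).choose (i+1) : ℚ)) / (m + 1) := by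
        rw [Finset.sum_div]; exact Finset.sum_congr rfl fun i _ => (mul_div_assoc _ _ _).symm
    _ = 1 / (m + 1) := by
        congr 1
        have h0 : (∑ i ∈ Finset.range (m + 2), (-1 : ℤ) ^ i * ((m+1).choose i : ℤ)) = 0 := by
          simpa using Int.alternating_sum_range_choose_of_ne (Nat.succ_ne_zero m)
        have h0' : (∑ i ∈ Finset.range (m + 2), (-1 : ℚ) ^ i * ((m+1).choose i : ℚ)) = 0 := by
          exact_mod_cast congrArg (Int.cast : ℤ → ℚ) h0
        rw [Finset.sum_range_succ'] at h0'
        simp only [pow_succ] at h0'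
        have : ∑ i ∈ Finset.range (m+1), (-1:ℚ)^i * ((m+1).choose (i+1) : ℚ)
            = - ∑ i ∈ Finset.range (m+1), (-1:ℚ)^i * (-1) * ((m+1).choose (i+1) : ℚ) := by
          rw [← Finset.sum_neg_distrib]; exact Finset.sum_congr rfl fun i _ => by ring
        rw [this]
        simp at h0'
        linarith [h0']

/-- The logarithm series of the partial-sum transformation:
`∑_{j=1}^{n} ((-1)^{j+1}/j) (E^j a) n = ∑_{k=0}^{n-1} a k / (n - k)`. -/
theorem partialSumBelow_log (a : ℕ → ℚ) (n : ℕ) (hn : 1 ≤ n) :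
    ∑ j ∈ Finset.Icc 1 n, (-1 : ℚ) ^ (j + 1) / (j : ℚ) * (partialSumBelow^[j] a) n
      = ∑ k ∈ Finset.range n, a k / ((n - k : ℕ) : ℚ) := by
  rw [show Finset.Icc 1 n = Finset.Ico 1 (n+1) by rw [Finset.Ico_add_one_right_eq_Icc],
    Finset.sum_Ico_eq_sum_range]
  simp only [show ∀ i, 1 + i = i + 1 from fun i => by omega, iterate_partialSumBelow,
    Finset.mul_sum]
  rw [show n + 1 - 1 = n by omega, Finset.sum_comm]
  refine Finset.sum_congr rfl fun k hk => ?_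
  rw [Finset.mem_range] at hk
  set m := n - k - 1 with hm
  have hnk : n - k = m + 1 := by omega
  have hmn : m + 1 ≤ n := by omega
  rw [hnk]
  have : ∑ i ∈ Finset.range n, (-1:ℚ)^(i+1+1) / (i+1 : ℕ) * ((m.choose i : ℚ) * a k)
      = (∑ i ∈ Finset.range (m+1), (-1:ℚ)^i * (m.choose i : ℚ) / (i+1)) * a k := by
    rw [Finset.sum_mul, ← Finset.sum_subset (Finset.range_subset_range.mpr hmn)]
    · refine Finset.sum_congr rfl fun i _ => ?_
      push_cast
      ring
    · intro i _ hi
      rw [Finset.mem_range, not_lt] at hi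
      rw [Nat.choose_eq_zero_of_lt (by omega)]
      simp
  rw [this, alt_sum_choose_div]
  push_cast
  ring
end
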